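/- The q-series identity (due to Ramanujan): (1/(q)_∞²) · Σ_{k≥0} (-1)^k q^{(k²+k)/2} = (1/(q)_∞) · Σ_{k≥0} q^{k²+k}/((q)_k)², where (q)_∞ = ∏_{i≥1}(1-q^i) and (q)_k = ∏_{i=1}^k (1-q^i), as an identity of formal power series in q. -/

import Mathlib

/- Ramanujan's identity:
   (1/(q)_∞²) Σ_{k≥0} (-1)^k q^{(k²+k)/2} = (1/(q)_∞) Σ_{k≥0} q^{k²+k}/((q)_k)²
   as formal power series in q.  We state the identity coefficientwise: the
   coefficient of q^N of each side can be computed from the truncations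
   (q)_{N+1} of (q)_∞ and sums over k ≤ N, since all omitted terms have
   order > N. -/

open PowerSeries Finset

/-- The q-Pochhammer symbol `(q)_k = ∏_{i=1}^k (1 - q^i)` in `ℚ[[q]]`. -/
noncomputable def qPoch (k : ℕ) : PowerSeries ℚ :=
  ∏ i ∈ Finset.range k, (1 - (PowerSeries.X : PowerSeries ℚ) ^ (i + 1))

lemma qPoch_succ (k : ℕ) :
    qPoch (k + 1) = qPoch k * (1 - (X : PowerSeries ℚ) ^ (k + 1)) := by
  simp [qPoch, Finset.prod_range_succ]

lemma constantCoeff_qPoch (k : ℕ) : constantCoeff (qPoch k) = 1 := by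
  rw [qPoch, map_prod]
  apply Finset.prod_eq_one
  intro i _
  simp

lemma qPoch_mul_inv (k : ℕ) : qPoch k * (qPoch k)⁻¹ = 1 :=
  PowerSeries.mul_inv_cancel _ (by rw [constantCoeff_qPoch]; norm_num)

lemma inv_qPoch_succ (k : ℕ) :
    (qPoch k)⁻¹ = (1 - (X : PowerSeries ℚ) ^ (k + 1)) * (qPoch (k + 1))⁻¹ := by
  rw [eq_comm, PowerSeries.eq_inv_iff_mul_eq_one
      (by rw [constantCoeff_qPoch]; norm_num)]
  calc (1 - (X : PowerSeries ℚ) ^ (k + 1)) * (qPoch (k + 1))⁻¹ * qPoch k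
      = (qPoch k * (1 - (X : PowerSeries ℚ) ^ (k + 1))) * (qPoch (k + 1))⁻¹ := by ring
    _ = 1 := by rw [← qPoch_succ, qPoch_mul_inv]

/-- Truncated generalized Durfee-rectangle sum `D_r = Σ_m q^{m(m+r)} / ((q)_m (q)_{m+r})`. -/
noncomputable def DD (N r : ℕ) : PowerSeries ℚ :=
  ∑ m ∈ Finset.range (N + 2),
    (X : PowerSeries ℚ) ^ (m * (m + r)) * ((qPoch m)⁻¹ * (qPoch (m + r))⁻¹)

/-- Truncated sum `E_{r+1} = Σ_m q^{m(m+r+1)} / ((q)_m (q)_{m+r})`. -/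
noncomputable def EE (N r : ℕ) : PowerSeries ℚ :=
  ∑ m ∈ Finset.range (N + 2),
    (X : PowerSeries ℚ) ^ (m * (m + r + 1)) * ((qPoch m)⁻¹ * (qPoch (m + r))⁻¹)

/-- Exact relation `E_{r+1} = D_{r+1} - q^{r+1} E_{r+2}`. -/
lemma EE_eq (N r : ℕ) :
    EE N r = DD N (r + 1) - (X : PowerSeries ℚ) ^ (r + 1) * EE N (r + 1) := by
  rw [DD, EE, EE, Finset.mul_sum, ← Finset.sum_sub_distrib]
  apply Finset.sum_congr rfl
  intro m _
  rw [inv_qPoch_succ (m + r)]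
  have e1 : m + (r + 1) = m + r + 1 := by ring
  rw [e1]
  have e2 : (r + 1) + m * (m + r + 1 + 1) = m * (m + r + 1) + (m + r + 1) := by ring
  rw [← mul_assoc ((X : PowerSeries ℚ) ^ (r + 1)), ← pow_add, e2, pow_add]
  ring

/-- Exact relation `D_r = E_{r+1} + q^{r+1} E_{r+2} - (boundary term)`. -/
lemma DD_eq (N r : ℕ) :
    DD N r = EE N r + (X : PowerSeries ℚ) ^ (r + 1) * EE N (r + 1)
      - (X : PowerSeries ℚ) ^ (r + 1) *
          ((X : PowerSeries ℚ) ^ ((N + 1) * (N + 1 + (r + 1) + 1)) *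
            ((qPoch (N + 1))⁻¹ * (qPoch (N + 1 + (r + 1)))⁻¹)) := by
  have key : DD N r - EE N r
      = (X : PowerSeries ℚ) ^ (r + 1) * EE N (r + 1)
        - (X : PowerSeries ℚ) ^ (r + 1) *
            ((X : PowerSeries ℚ) ^ ((N + 1) * (N + 1 + (r + 1) + 1)) *
              ((qPoch (N + 1))⁻¹ * (qPoch (N + 1 + (r + 1)))⁻¹)) := by
    rw [DD, EE, ← Finset.sum_sub_distrib]
    have hterm : ∀ m : ℕ,
        (X : PowerSeries ℚ) ^ (m * (m + r)) * ((qPoch m)⁻¹ * (qPoch (m + r))⁻¹)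
          - X ^ (m * (m + r + 1)) * ((qPoch m)⁻¹ * (qPoch (m + r))⁻¹)
        = X ^ (m * (m + r)) * (((1 - X ^ m) * (qPoch m)⁻¹) * (qPoch (m + r))⁻¹) := by
      intro m
      have e : m * (m + r + 1) = m * (m + r) + m := by ring
      rw [e, pow_add]; ring
    rw [Finset.sum_congr rfl (fun m _ => hterm m), Finset.sum_range_succ']
    have h0 : (X : PowerSeries ℚ) ^ (0 * (0 + r)) *
        (((1 - X ^ 0) * (qPoch 0)⁻¹) * (qPoch (0 + r))⁻¹) = 0 := by
      simp
    rw [h0, add_zero]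
    have eR : (X : PowerSeries ℚ) ^ (r + 1) * EE N (r + 1)
        - (X : PowerSeries ℚ) ^ (r + 1) *
            ((X : PowerSeries ℚ) ^ ((N + 1) * (N + 1 + (r + 1) + 1)) *
              ((qPoch (N + 1))⁻¹ * (qPoch (N + 1 + (r + 1)))⁻¹))
        = ∑ j ∈ Finset.range (N + 1), (X : PowerSeries ℚ) ^ (r + 1) *
            ((X : PowerSeries ℚ) ^ (j * (j + (r + 1) + 1)) *
              ((qPoch j)⁻¹ * (qPoch (j + (r + 1)))⁻¹)) := by
      rw [EE, Finset.sum_range_succ, mul_add, add_sub_cancel_right, Finset.mul_sum]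
    rw [eR]
    apply Finset.sum_congr rfl
    intro j _
    rw [← inv_qPoch_succ j]
    have e1 : j + (r + 1) = j + 1 + r := by ring
    rw [e1, ← mul_assoc ((X : PowerSeries ℚ) ^ (r + 1)), ← pow_add,
      show (r + 1) + (j * (j + 1 + r + 1)) = (j + 1) * (j + 1 + r) from by ring]
  linear_combination key

/-- Hence `X^(N+1) ∣ D_r - D_{r+1}`. -/
lemma DD_succ_dvd (N r : ℕ) :
    (X : PowerSeries ℚ) ^ (N + 1) ∣ DD N r - DD N (r + 1) := by
  have h : DD N r - DD N (r + 1)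
      = -((X : PowerSeries ℚ) ^ (r + 1) *
          ((X : PowerSeries ℚ) ^ ((N + 1) * (N + 1 + (r + 1) + 1)) *
            ((qPoch (N + 1))⁻¹ * (qPoch (N + 1 + (r + 1)))⁻¹))) := by
    rw [DD_eq N r, EE_eq N r]; ring
  rw [h]
  rw [dvd_neg]
  have hle : N + 1 ≤ (N + 1) * (N + 1 + (r + 1) + 1) :=
    Nat.le_mul_of_pos_right _ (by omega)
  exact dvd_mul_of_dvd_right (dvd_mul_of_dvd_left (pow_dvd_pow X hle) _) _

lemma DD_chain (N r s : ℕ) (h : r ≤ s) :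
    (X : PowerSeries ℚ) ^ (N + 1) ∣ DD N r - DD N s := by
  induction s with
  | zero => simp [Nat.le_zero.mp h]
  | succ s ih =>
    rcases Nat.lt_or_ge r (s + 1) with hs | hs
    · have := ih (Nat.lt_succ_iff.mp hs)
      have h2 := DD_succ_dvd N s
      have : (X : PowerSeries ℚ) ^ (N + 1) ∣
          (DD N r - DD N s) + (DD N s - DD N (s + 1)) := dvd_add this h2
      simpa using this
    · have : r = s + 1 := le_antisymm h hs
      simp [this]

lemma DD_top (N : ℕ) :
    (X : PowerSeries ℚ) ^ (N + 1) ∣ DD N (N + 1) - (qPoch (N + 1))⁻¹ := by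
  rw [DD, Finset.sum_range_succ']
  have h0 : (X : PowerSeries ℚ) ^ (0 * (0 + (N + 1))) *
      ((qPoch 0)⁻¹ * (qPoch (0 + (N + 1)))⁻¹) = (qPoch (N + 1))⁻¹ := by
    simp [qPoch]
  rw [h0, add_sub_cancel_right]
  apply Finset.dvd_sum
  intro j _
  apply dvd_mul_of_dvd_left
  apply pow_dvd_pow
  calc N + 1 ≤ j + 1 + (N + 1) := by omega
    _ ≤ (j + 1) * (j + 1 + (N + 1)) := Nat.le_mul_of_pos_left _ (by omega)

def tri (j : ℕ) : ℕ := (j ^ 2 + j) / 2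

lemma two_tri (j : ℕ) : 2 * tri j = j ^ 2 + j := by
  rw [tri, Nat.two_mul_div_two_of_even]
  have : j ^ 2 + j = j * (j + 1) := by ring
  rw [this]; exact Nat.even_mul_succ_self j

lemma tri_succ (j : ℕ) : tri (j + 1) = tri j + (j + 1) := by
  have h1 := two_tri j
  have h2 := two_tri (j + 1)
  have h3 : (j + 1) ^ 2 + (j + 1) = (j ^ 2 + j) + 2 * (j + 1) := by ring
  omega

lemma tri_ge (j : ℕ) : j ≤ tri j := by
  induction j with
  | zero => simp
  | succ j ih => rw [tri_succ]; omega

/-- Unrolling `E_1 = Σ_j (-1)^j q^(tri j) D_{j+1} ± q^(tri J) E_{J+1}`. -/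
lemma unroll (N : ℕ) : ∀ J : ℕ,
    EE N 0 = (∑ j ∈ Finset.range J,
        (-1 : PowerSeries ℚ) ^ j * (X : PowerSeries ℚ) ^ (tri j) * DD N (j + 1))
      + (-1 : PowerSeries ℚ) ^ J * (X : PowerSeries ℚ) ^ (tri J) * EE N J := by
  intro J
  induction J with
  | zero => simp [tri]
  | succ J ih =>
    rw [ih, EE_eq N J, Finset.sum_range_succ, tri_succ]
    have : (-1 : PowerSeries ℚ) ^ (J + 1) = -(-1 : PowerSeries ℚ) ^ J := by ring
    rw [this, pow_add]
    ring

theorem ramanujan_identity (N : ℕ) :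
    PowerSeries.coeff N
      ((qPoch (N + 1))⁻¹ ^ 2 *
        ∑ k ∈ Finset.range (N + 1),
          (-1 : PowerSeries ℚ) ^ k * (PowerSeries.X : PowerSeries ℚ) ^ ((k ^ 2 + k) / 2))
    =
    PowerSeries.coeff N
      ((qPoch (N + 1))⁻¹ *
        ∑ k ∈ Finset.range (N + 1),
          (PowerSeries.X : PowerSeries ℚ) ^ (k ^ 2 + k) * ((qPoch k)⁻¹) ^ 2) := by
  have key : (X : PowerSeries ℚ) ^ (N + 1) ∣
      EE N 0 - (∑ j ∈ Finset.range (N + 1),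
        (-1 : PowerSeries ℚ) ^ j * X ^ (tri j)) * (qPoch (N + 1))⁻¹ := by
    have hsub : ∀ j ∈ Finset.range (N + 1), (X : PowerSeries ℚ) ^ (N + 1) ∣
        (-1 : PowerSeries ℚ) ^ j * X ^ (tri j) * DD N (j + 1)
          - (-1 : PowerSeries ℚ) ^ j * X ^ (tri j) * (qPoch (N + 1))⁻¹ := by
      intro j hj
      have h1 : (X : PowerSeries ℚ) ^ (N + 1) ∣ DD N (j + 1) - (qPoch (N + 1))⁻¹ := by
        have hc := DD_chain N (j + 1) (N + 1)
          (Nat.succ_le_of_lt (Finset.mem_range.mp hj))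
        have h2 := DD_top N
        have := dvd_add hc h2
        simpa using this
      have := h1.mul_left ((-1 : PowerSeries ℚ) ^ j * X ^ (tri j))
      rw [mul_sub] at this
      exact this
    have hrem : (X : PowerSeries ℚ) ^ (N + 1) ∣
        (-1 : PowerSeries ℚ) ^ (N + 1) * X ^ (tri (N + 1)) * EE N (N + 1) :=
      dvd_mul_of_dvd_left (dvd_mul_of_dvd_right (pow_dvd_pow X (tri_ge (N + 1))) _) _
    have e : (∑ j ∈ Finset.range (N + 1),
          (-1 : PowerSeries ℚ) ^ j * X ^ (tri j) * DD N (j + 1))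
        + (-1 : PowerSeries ℚ) ^ (N + 1) * X ^ (tri (N + 1)) * EE N (N + 1)
        - (∑ j ∈ Finset.range (N + 1),
            (-1 : PowerSeries ℚ) ^ j * X ^ (tri j)) * (qPoch (N + 1))⁻¹
      = (∑ j ∈ Finset.range (N + 1),
          ((-1 : PowerSeries ℚ) ^ j * X ^ (tri j) * DD N (j + 1)
            - (-1 : PowerSeries ℚ) ^ j * X ^ (tri j) * (qPoch (N + 1))⁻¹))
        + (-1 : PowerSeries ℚ) ^ (N + 1) * X ^ (tri (N + 1)) * EE N (N + 1) := by
      rw [Finset.sum_sub_distrib, Finset.sum_mul]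
      ring
    rw [unroll N (N + 1), e]
    exact dvd_add (Finset.dvd_sum hsub) hrem
  have hb : (X : PowerSeries ℚ) ^ (N + 1) ∣
      EE N 0 - ∑ k ∈ Finset.range (N + 1),
        (X : PowerSeries ℚ) ^ (k ^ 2 + k) * ((qPoch k)⁻¹) ^ 2 := by
    rw [EE]
    have e : ∀ m : ℕ, (X : PowerSeries ℚ) ^ (m * (m + 0 + 1)) *
        ((qPoch m)⁻¹ * (qPoch (m + 0))⁻¹)
        = (X : PowerSeries ℚ) ^ (m ^ 2 + m) * ((qPoch m)⁻¹) ^ 2 := by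
      intro m
      rw [show m * (m + 0 + 1) = m ^ 2 + m from by ring, Nat.add_zero]
      ring
    rw [Finset.sum_congr rfl (fun m _ => e m), Finset.sum_range_succ,
      add_sub_cancel_left]
    exact dvd_mul_of_dvd_left
      (pow_dvd_pow X (Nat.le_add_left (N + 1) ((N + 1) ^ 2))) _
  have hc : (X : PowerSeries ℚ) ^ (N + 1) ∣
      (qPoch (N + 1))⁻¹ ^ 2 * (∑ j ∈ Finset.range (N + 1),
          (-1 : PowerSeries ℚ) ^ j * X ^ (tri j))
        - (qPoch (N + 1))⁻¹ * ∑ k ∈ Finset.range (N + 1),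
            (X : PowerSeries ℚ) ^ (k ^ 2 + k) * ((qPoch k)⁻¹) ^ 2 := by
    have h1 := key.mul_left ((qPoch (N + 1))⁻¹)
    have h2 := hb.mul_left ((qPoch (N + 1))⁻¹)
    have h3 := dvd_sub h2 h1
    have e : (qPoch (N + 1))⁻¹ * (EE N 0 - ∑ k ∈ Finset.range (N + 1),
            (X : PowerSeries ℚ) ^ (k ^ 2 + k) * ((qPoch k)⁻¹) ^ 2)
        - (qPoch (N + 1))⁻¹ * (EE N 0 - (∑ j ∈ Finset.range (N + 1),
            (-1 : PowerSeries ℚ) ^ j * X ^ (tri j)) * (qPoch (N + 1))⁻¹)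
      = (qPoch (N + 1))⁻¹ ^ 2 * (∑ j ∈ Finset.range (N + 1),
            (-1 : PowerSeries ℚ) ^ j * X ^ (tri j))
        - (qPoch (N + 1))⁻¹ * ∑ k ∈ Finset.range (N + 1),
            (X : PowerSeries ℚ) ^ (k ^ 2 + k) * ((qPoch k)⁻¹) ^ 2 := by ring
    rwa [e] at h3
  simp only [tri] at hc
  have := (PowerSeries.X_pow_dvd_iff.mp hc) N (Nat.lt_succ_self N)
  rw [map_sub, sub_eq_zero] at this
  exact this
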